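/- Let Λ ⊆ EuclideanSpace ℝ (Fin 3) be the ℤ-span of (2,0,0), (0,2,0) and (1,0,1) (a lattice of covolume 4). Then: (i) the vectors (1,0,1) and (-1,0,1) lie in Λ, are orthogonal, and both have norm √2, but 2·4/(√2)³ = 2√2 is not an integer; (ii) every pair of nonzero orthogonal vectors v₁, v₂ ∈ Λ with ‖v₁‖ = ‖v₂‖ = l and 8/l³ ∈ ℤ satisfies l ≥ 2; and (iii) the pair (2,0,0), (0,2,0) realises l = 2 with 8/2³ = 1 ∈ ℤ. -/

import Mathlib

open scoped RealInnerProductSpace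

/-- The vector `(2,0,0)`. -/
noncomputable def u₁ : EuclideanSpace ℝ (Fin 3) := EuclideanSpace.single 0 (2 : ℝ)

/-- The vector `(0,2,0)`. -/
noncomputable def u₂ : EuclideanSpace ℝ (Fin 3) := EuclideanSpace.single 1 (2 : ℝ)

/-- The vector `(1,0,1)`. -/
noncomputable def u₃ : EuclideanSpace ℝ (Fin 3) :=
  EuclideanSpace.single 0 (1 : ℝ) + EuclideanSpace.single 2 (1 : ℝ)

/-- The lattice generated by `(2,0,0)`, `(0,2,0)` and `(1,0,1)` (covolume 4). -/
noncomputable def specialLattice : Submodule ℤ (EuclideanSpace ℝ (Fin 3)) :=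
  Submodule.span ℤ {u₁, u₂, u₃}

lemma fin02 : (0 : Fin 3) ≠ 2 := by decide
lemma fin20 : (2 : Fin 3) ≠ 0 := by decide
lemma fin12 : (1 : Fin 3) ≠ 2 := by decide
lemma fin01 : (0 : Fin 3) ≠ 1 := by decide
lemma fin10 : (1 : Fin 3) ≠ 0 := by decide
lemma fin21 : (2 : Fin 3) ≠ 1 := by decide

lemma sq_one_le (k : ℤ) (hk : k ≠ 0) : 1 ≤ k^2 := by
  rcases lt_or_gt_of_ne hk with h | h <;> nlinarith

lemma int_key (a b c : ℤ) (h : ¬(a = 0 ∧ b = 0 ∧ c = 0)) :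
    (2*a+c)^2 + (2*b)^2 + c^2 = 2 ∨ 4 ≤ (2*a+c)^2 + (2*b)^2 + c^2 := by
  rcases Int.even_or_odd c with ⟨k, hk⟩ | ⟨k, hk⟩
  · subst hk
    right
    have h1 : 1 ≤ (a+k)^2 + b^2 + k^2 := by
      rcases eq_or_ne (a+k) 0 with h0 | h0
      · rcases eq_or_ne b 0 with hb | hb
        · rcases eq_or_ne k 0 with hk0 | hk0
          · exact absurd ⟨by omega, hb, by omega⟩ h
          · nlinarith [sq_one_le k hk0, sq_nonneg (a+k), sq_nonneg b]
        · nlinarith [sq_one_le b hb, sq_nonneg (a+k), sq_nonneg k]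
      · nlinarith [sq_one_le _ h0, sq_nonneg b, sq_nonneg k]
    nlinarith
  · subst hk
    obtain ⟨m, hm⟩ : ∃ m, m = a + k := ⟨_, rfl⟩
    have hA : 2*a + (2*k+1) = 2*m+1 := by omega
    rw [hA]
    rcases eq_or_ne b 0 with hb | hb
    · subst hb
      by_cases hme : m = 0 ∨ m = -1
      · by_cases hke : k = 0 ∨ k = -1
        · left
          rcases hme with rfl | rfl <;> rcases hke with rfl | rfl <;> ring
        · right
          have hk9 : 9 ≤ (2*k+1)^2 := by
            have : k ≥ 1 ∨ k ≤ -2 := by omega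
            rcases this with h' | h' <;> nlinarith
          nlinarith [sq_nonneg (2*m+1)]
      · right
        have hm9 : 9 ≤ (2*m+1)^2 := by
          have : m ≥ 1 ∨ m ≤ -2 := by omega
          rcases this with h' | h' <;> nlinarith
        nlinarith [sq_nonneg (2*k+1)]
    · right
      have hb4 : 4 ≤ (2*b)^2 := by nlinarith [sq_one_le b hb]
      have h1 : 1 ≤ (2*m+1)^2 := by rcases le_or_gt 0 m with h'|h' <;> nlinarith
      have h2 : 1 ≤ (2*k+1)^2 := by rcases le_or_gt 0 k with h'|h' <;> nlinarith
      nlinarith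

lemma normsq_key (v : EuclideanSpace ℝ (Fin 3)) (hv : v ∈ specialLattice) (hne : v ≠ 0) :
    ‖v‖^2 = 2 ∨ 4 ≤ ‖v‖^2 := by
  rw [specialLattice, Submodule.mem_span_insert] at hv
  obtain ⟨a, z, hz, rfl⟩ := hv
  rw [Submodule.mem_span_insert] at hz
  obtain ⟨b, w, hw, rfl⟩ := hz
  rw [Submodule.mem_span_singleton] at hw
  obtain ⟨c, rfl⟩ := hw
  set v : EuclideanSpace ℝ (Fin 3) := a • u₁ + (b • u₂ + c • u₃) with hv
  have h0 : v 0 = 2*a + c := by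
    simp [hv, u₁, u₂, u₃, EuclideanSpace.single_apply, fin01, fin02, fin10, fin20]
    ring
  have h1 : v 1 = 2*b := by
    simp [hv, u₁, u₂, u₃, EuclideanSpace.single_apply, fin01, fin12, fin10, fin21]
    ring
  have h2 : v 2 = c := by
    simp [hv, u₁, u₂, u₃, EuclideanSpace.single_apply, fin02, fin12, fin20, fin21]
  have hnorm : ‖v‖^2 = ((2*a+c)^2 + (2*b)^2 + c^2 : ℤ) := by
    rw [EuclideanSpace.norm_eq, Real.sq_sqrt (by positivity)]
    rw [Fin.sum_univ_three, h0, h1, h2]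
    push_cast
    simp [Real.norm_eq_abs, sq_abs, mul_pow]
  have hc : ¬(a = 0 ∧ b = 0 ∧ c = 0) := by
    rintro ⟨rfl, rfl, rfl⟩
    simp [hv] at hne
  rcases int_key a b c hc with h | h
  · left; rw [hnorm, h]; norm_num
  · right; rw [hnorm]; exact_mod_cast h

lemma cube_sqrt2 : (Real.sqrt 2)^3 = 2 * Real.sqrt 2 := by
  have h : Real.sqrt 2 ^ 2 = 2 := Real.sq_sqrt (by norm_num)
  nlinarith [Real.sqrt_nonneg 2]

lemma div_sqrt : 2 * 4 / (Real.sqrt 2) ^ 3 = 2 * Real.sqrt 2 := by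
  rw [cube_sqrt2]
  have h : Real.sqrt 2 ^ 2 = 2 := Real.sq_sqrt (by norm_num)
  have hne : Real.sqrt 2 ≠ 0 := by positivity
  field_simp
  nlinarith [Real.sqrt_nonneg 2]

lemma not_int_2sqrt2 : ¬∃ n : ℤ, 2 * Real.sqrt 2 = (n : ℝ) := by
  rintro ⟨n, hn⟩
  exact irrational_sqrt_two ⟨(n : ℚ)/2, by push_cast; linarith⟩

lemma mem1 : u₁ ∈ specialLattice := Submodule.subset_span (by simp)
lemma mem2 : u₂ ∈ specialLattice := Submodule.subset_span (by simp)
lemma mem3 : u₃ ∈ specialLattice := Submodule.subset_span (by simp)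

/-- In the lattice spanned by `(2,0,0)`, `(0,2,0)`, `(1,0,1)`: the pair `(1,0,1)`,
`(-1,0,1)` is orthogonal of common length `√2`, but `2·4/(√2)³ = 2√2` is not an integer;
every orthogonal equal-length pair of nonzero lattice vectors whose length `l` satisfies
`8/l³ ∈ ℤ` has `l ≥ 2`; and the pair `(2,0,0)`, `(0,2,0)` realises `l = 2` with
`8/2³ = 1 ∈ ℤ`. -/
theorem special_lattice_recovers_h :
    (u₃ ∈ specialLattice ∧ u₃ - u₁ ∈ specialLattice ∧
      ⟪u₃, u₃ - u₁⟫ = 0 ∧ ‖u₃‖ = Real.sqrt 2 ∧ ‖u₃ - u₁‖ = Real.sqrt 2 ∧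
      2 * 4 / (Real.sqrt 2) ^ 3 = 2 * Real.sqrt 2 ∧
      ¬∃ n : ℤ, 2 * 4 / (Real.sqrt 2) ^ 3 = (n : ℝ)) ∧
    (∀ v₁ v₂ : EuclideanSpace ℝ (Fin 3), v₁ ∈ specialLattice → v₂ ∈ specialLattice →
      v₁ ≠ 0 → v₂ ≠ 0 → ⟪v₁, v₂⟫ = 0 → ‖v₁‖ = ‖v₂‖ →
      (∃ n : ℤ, 8 / ‖v₁‖ ^ 3 = (n : ℝ)) → 2 ≤ ‖v₁‖) ∧
    (u₁ ∈ specialLattice ∧ u₂ ∈ specialLattice ∧ ⟪u₁, u₂⟫ = 0 ∧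
      ‖u₁‖ = 2 ∧ ‖u₂‖ = 2 ∧ (8 : ℝ) / 2 ^ 3 = ((1 : ℤ) : ℝ)) := by
  refine ⟨⟨mem3, sub_mem mem3 mem1, ?_, ?_, ?_, div_sqrt, ?_⟩, ?_, mem1, mem2, ?_, ?_, ?_, by norm_num⟩
  · simp [u₁, u₃, PiLp.inner_apply, Fin.sum_univ_three, EuclideanSpace.single_apply,
      fin02, fin20, fin12, fin01, fin10, fin21]
    ring
  · rw [EuclideanSpace.norm_eq]
    norm_num [u₃, Fin.sum_univ_three, EuclideanSpace.single_apply, fin02, fin20, fin12]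
  · rw [EuclideanSpace.norm_eq]
    norm_num [u₁, u₃, Fin.sum_univ_three, EuclideanSpace.single_apply, fin02, fin20, fin12]
  · rw [div_sqrt]; exact not_int_2sqrt2
  · intro v₁ v₂ h₁ h₂ hn₁ hn₂ _ _ hint
    rcases normsq_key v₁ h₁ hn₁ with h | h
    · exfalso
      have hv : ‖v₁‖ = Real.sqrt 2 := by
        rw [← h, Real.sqrt_sq (norm_nonneg _)]
      obtain ⟨n, hn⟩ := hint
      refine not_int_2sqrt2 ⟨n, ?_⟩
      rw [← hn, hv, cube_sqrt2]
      have hne : Real.sqrt 2 ≠ 0 := by positivity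
      have h2 : Real.sqrt 2 ^ 2 = 2 := Real.sq_sqrt (by norm_num)
      field_simp
      nlinarith [Real.sqrt_nonneg 2]
    · nlinarith [norm_nonneg v₁]
  · simp [u₁, u₂, PiLp.inner_apply, Fin.sum_univ_three, EuclideanSpace.single_apply,
      fin01, fin10]
  · rw [EuclideanSpace.norm_eq]
    norm_num [u₁, Fin.sum_univ_three, EuclideanSpace.single_apply, fin01, fin02]
  · rw [EuclideanSpace.norm_eq]
    norm_num [u₂, Fin.sum_univ_three, EuclideanSpace.single_apply, fin10, fin12]
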